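/- Let G be a finite group and k a field whose characteristic does not divide |G|, and let R = kG be embedded in the Drinfeld double H = D(G) as the subalgebra 1_{(kG)*} ⋈ kG. Then the quotient module Q = H/R⁺H, with dim_k Q = |G|, is isomorphic as a right G-module to kG_ad, the group algebra under the right adjoint action; explicitly, the coset of p_y ⋈ h maps to p_{h⁻¹yh}, and (kG)*_ad ≅ kG_ad via p_g ↦ g. -/

import Mathlib

set_option linter.unusedSectionVars false

namespace GroupModDepth

open MulOpposite TensorProduct

universe u

variable (k G : Type u) [Field k] [Group G]

/-- A right `G`-module (`k`-linear representation of `G` by right operators):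
a `k`-vector space with a monoid homomorphism `G →* (End_k V)ᵐᵒᵖ`. -/
structure GVec : Type (u+1) where
  V : Type u
  [acg : AddCommGroup V]
  [mod : Module k V]
  σ : G →* (Module.End k V)ᵐᵒᵖ

attribute [instance] GVec.acg GVec.mod

variable {k G}

/-- The action of `g` on a right `G`-module, as a `k`-linear endomorphism. -/
def GVec.act (W : GVec k G) (g : G) : Module.End k W.V := unop (W.σ g)

/-- Tensor product of right `G`-modules with the diagonal action. -/
noncomputable def GVec.tmul (M N : GVec k G) : GVec k G where
  V := TensorProduct k M.V N.V
  σ :=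
  { toFun := fun g => op (TensorProduct.map (M.act g) (N.act g))
    map_one' := by
      apply unop_injective
      refine LinearMap.ext fun v => ?_
      simp only [GVec.act, map_one, unop_one, unop_op]
      rw [show ((1 : Module.End k M.V)) = LinearMap.id from rfl,
        show ((1 : Module.End k N.V)) = LinearMap.id from rfl, TensorProduct.map_id]
      rfl
    map_mul' := fun g h => by
      apply unop_injective
      simp only [GVec.act, map_mul, unop_mul, unop_op, Module.End.mul_eq_comp,
        TensorProduct.map_comp] }

/-- The trivial right `G`-module `k`. -/
def GVec.triv : GVec k G where
  V := k
  σ := 1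

/-- Direct sum (finite product) of right `G`-modules. -/
noncomputable def GVec.pi {m : ℕ} (F : Fin m → GVec k G) : GVec k G where
  V := ∀ i, (F i).V
  σ :=
  { toFun := fun g => op (LinearMap.pi (fun i => ((F i).act g).comp (LinearMap.proj i)))
    map_one' := by
      apply unop_injective
      exact LinearMap.ext fun v => funext fun i => by simp [GVec.act]
    map_mul' := fun g h => by
      apply unop_injective
      refine LinearMap.ext fun v => funext fun i => ?_
      simp [GVec.act, Module.End.mul_eq_comp] }

/-- `q` copies of a right `G`-module. -/
noncomputable def GVec.copies (q : ℕ) (N : GVec k G) : GVec k G := GVec.pi (fun _ : Fin q => N)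

/-- Tensor powers: `tpow W n = W^{⊗(n+1)}` with the diagonal `G`-action. -/
noncomputable def GVec.tpow (W : GVec k G) : ℕ → GVec k G
  | 0 => W
  | n+1 => (W.tpow n).tmul W

/-- `Tsum W n = T_{n+1}(W) = W ⊕ W^{⊗2} ⊕ ⋯ ⊕ W^{⊗(n+1)}`. -/
noncomputable def GVec.Tsum (W : GVec k G) (n : ℕ) : GVec k G :=
  GVec.pi (fun i : Fin (n+1) => W.tpow i)

/-- `M | N`: `M` is isomorphic to a direct summand of `N` as right `G`-modules
(equivalently, as `kG`-modules). -/
def GVec.Dvd (M N : GVec k G) : Prop :=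
  ∃ (f : M.V →ₗ[k] N.V) (g : N.V →ₗ[k] M.V),
    (∀ (x : G) v, f (M.act x v) = N.act x (f v)) ∧
    (∀ (x : G) w, g (N.act x w) = M.act x (g w)) ∧
    (∀ v, g (f v) = v)

/-- Isomorphism of right `G`-modules. -/
def GVec.Iso (M N : GVec k G) : Prop :=
  ∃ (f : M.V →ₗ[k] N.V) (g : N.V →ₗ[k] M.V),
    (∀ (x : G) v, f (M.act x v) = N.act x (f v)) ∧
    (∀ (x : G) w, g (N.act x w) = M.act x (g w)) ∧
    (∀ v, g (f v) = v) ∧ (∀ w, f (g w) = w)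

/-- A right `G`-module `W` (equivalently, `kG`-module) has depth `n`. -/
def GVec.hasDepth (W : GVec k G) : ℕ → Prop
  | 0 => ∃ q, W.Iso (GVec.copies q (GVec.triv (k := k) (G := G)))
  | n+1 => ∃ q, (W.Tsum (n+1)).Dvd (GVec.copies q (W.Tsum n))

/-- The minimum depth `d(W, 𝓜_{kG})` of `W` as a `kG`-module. -/
noncomputable def GVec.minDepth (W : GVec k G) : ℕ∞ :=
  sInf {m : ℕ∞ | ∃ j : ℕ, m = j ∧ W.hasDepth j}

/-- The action of the group algebra `kG` on a right `G`-module `W`. -/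
noncomputable def GVec.aact (W : GVec k G) : MonoidAlgebra k G →ₗ[k] Module.End k W.V :=
  Finsupp.linearCombination k (fun g => W.act g) ∘ₗ (MonoidAlgebra.coeffLinearEquiv k).toLinearMap

/-- `W` is a faithful `kG`-module: its annihilator in `kG` is zero. -/
def GVec.Faithful (W : GVec k G) : Prop := ∀ c : MonoidAlgebra k G, W.aact c = 0 → c = 0

/-- `ℓ_W`: the least `n ≥ 1` such that `W^{⊗n}` is a faithful `kG`-module. -/
noncomputable def GVec.ell (W : GVec k G) : ℕ :=
  sInf {n : ℕ | ∃ m, n = m + 1 ∧ (W.tpow m).Faithful}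

end GroupModDepth

namespace GroupModDepth

open MulOpposite TensorProduct

universe u

variable (k G : Type u) [Field k] [Group G]

/-- Conjugation `x ↦ g⁻¹ x g` on the group algebra, extended `k`-linearly. -/
noncomputable def adEnd (g : G) : Module.End k (MonoidAlgebra k G) :=
  MonoidAlgebra.mapDomainLinearMap k k (fun x => g⁻¹ * x * g)

lemma adEnd_single (g x : G) (b : k) :
    adEnd k G g (MonoidAlgebra.single x b) = MonoidAlgebra.single (g⁻¹ * x * g) b :=
  MonoidAlgebra.mapDomain_single

/-- The group algebra `kG` as a right `G`-module under the adjoint action `x · g = g⁻¹ x g`: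
the module `kG_ad` (isomorphic to `Q = D(G)/(kG)⁺D(G)`). -/
noncomputable def adRep : GVec k G where
  V := MonoidAlgebra k G
  σ :=
  { toFun := fun g => op (adEnd k G g)
    map_one' := by
      apply unop_injective
      refine MonoidAlgebra.lhom_ext' fun x => LinearMap.ext fun b => ?_
      simp only [LinearMap.comp_apply, MonoidAlgebra.lsingle_apply, unop_op, unop_one,
        adEnd_single, Module.End.one_apply]
      simp
    map_mul' := fun g h => by
      apply unop_injective
      refine MonoidAlgebra.lhom_ext' fun x => LinearMap.ext fun b => ?_
      simp only [LinearMap.comp_apply, MonoidAlgebra.lsingle_apply, unop_op, unop_mul,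
        Module.End.mul_apply, adEnd_single]
      simp [mul_assoc, mul_inv_rev] }

variable [DecidableEq G]

/-- Data exhibiting `D` as the Drinfeld double `D(G) = (kG)* ⋈ kG` of a finite group:
a linear equivalence `(G → k) ⊗ kG ≃ D` carrying the unit and satisfying the double's
multiplication rule `(p_x ⋈ g)(p_y ⋈ h) = p_x p_{gyg⁻¹} ⋈ gh` on the spanning set. -/
structure DoubleData (D : Type u) [Ring D] [Algebra k D] : Type u where
  e : ((G → k) ⊗[k] MonoidAlgebra k G) ≃ₗ[k] D
  unit : e ((1 : G → k) ⊗ₜ[k] (1 : MonoidAlgebra k G)) = 1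
  mul : ∀ x y g h : G,
    e (Pi.single x (1:k) ⊗ₜ[k] (MonoidAlgebra.of k G g)) *
      e (Pi.single y (1:k) ⊗ₜ[k] (MonoidAlgebra.of k G h))
    = e ((Pi.single x (1:k) * Pi.single (g * y * g⁻¹) (1:k)) ⊗ₜ[k]
        (MonoidAlgebra.of k G (g * h)))

variable {k G}
variable {D : Type u} [Ring D] [Algebra k D]

/-- The embedding `kG → D(G)`, `z ↦ 1 ⋈ z`. -/
noncomputable def DoubleData.emb (dd : DoubleData k G D) : MonoidAlgebra k G →ₗ[k] D :=
  dd.e.toLinearMap ∘ₗ (TensorProduct.mk k (G → k) (MonoidAlgebra k G)) (1 : G → k)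

/-- The subspace `(kG)⁺D(G)` of `D(G)`. -/
noncomputable def DoubleData.QI (dd : DoubleData k G D) : Submodule k D :=
  Submodule.span k {z : D | ∃ (c : MonoidAlgebra k G) (d : D),
    (c.coeff.sum fun _ a => a) = 0 ∧ z = dd.emb c * d}

/-- The quotient module `Q = D(G)/(kG)⁺D(G)`. -/
def DoubleData.Qcar (dd : DoubleData k G D) : Type u := D ⧸ dd.QI

noncomputable instance (dd : DoubleData k G D) : AddCommGroup dd.Qcar :=
  inferInstanceAs (AddCommGroup (D ⧸ dd.QI))
noncomputable instance (dd : DoubleData k G D) : Module k dd.Qcar :=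
  inferInstanceAs (Module k (D ⧸ dd.QI))

/-- The class of an element of `D(G)` in `Q`. -/
noncomputable def DoubleData.Qmk (dd : DoubleData k G D) (d : D) : dd.Qcar := Submodule.Quotient.mk d

lemma DoubleData.QIle (dd : DoubleData k G D) (d' : D) :
    dd.QI ≤ dd.QI.comap (LinearMap.mulRight k d') := by
  rw [DoubleData.QI, Submodule.span_le]
  rintro z ⟨c, d, hc, rfl⟩
  simp only [SetLike.mem_coe, Submodule.mem_comap, LinearMap.mulRight_apply]
  exact Submodule.subset_span ⟨c, d * d', hc, (mul_assoc _ d d')⟩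

/-- Right multiplication by an element of `D(G)` descends to `Q`. -/
noncomputable def DoubleData.Qact (dd : DoubleData k G D) (d' : D) :
    dd.Qcar →ₗ[k] dd.Qcar :=
  Submodule.mapQ _ _ (LinearMap.mulRight k d') (dd.QIle d')

end GroupModDepth

namespace GroupModDepth

section Aux

set_option synthInstance.maxHeartbeats 1000000

open TensorProduct

universe v

variable {k G : Type v} [Field k] [Group G] [Fintype G] [DecidableEq G]
variable {D : Type v} [Ring D] [Algebra k D]

/-- `f ↦ ∑ y, f y • single (h⁻¹ y h) 1`. -/
noncomputable def Lmap (h : G) : (G → k) →ₗ[k] MonoidAlgebra k G :=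
  ∑ y : G, LinearMap.smulRight (LinearMap.proj y)
    (MonoidAlgebra.single (h⁻¹ * y * h) (1:k))

lemma Lmap_single (h y : G) :
    Lmap h (Pi.single y (1:k)) = MonoidAlgebra.single (h⁻¹ * y * h) (1:k) := by
  rw [Lmap, LinearMap.sum_apply, Finset.sum_eq_single y]
  · simp
  · intro w _ hw
    simp [Pi.single_apply, hw.symm]
  · simp

/-- The map `p_y ⊗ single h b ↦ b • single (h⁻¹yh) 1` on the tensor product. -/
noncomputable def tauMap : ((G → k) ⊗[k] MonoidAlgebra k G) →ₗ[k] MonoidAlgebra k G :=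
  TensorProduct.lift
    (((Finsupp.lsum k (fun h => LinearMap.toSpanSingleton k
      ((G → k) →ₗ[k] MonoidAlgebra k G) (Lmap h))).flip).compl₂
        (MonoidAlgebra.coeffLinearEquiv k).toLinearMap)

lemma tauMap_tmul (f : G → k) (h : G) (b : k) :
    tauMap (f ⊗ₜ[k] MonoidAlgebra.single h b) = b • Lmap h f := by
  rw [tauMap, TensorProduct.lift.tmul]
  show (Finsupp.lsum k (fun h => LinearMap.toSpanSingleton k
      ((G → k) →ₗ[k] MonoidAlgebra k G) (Lmap h))) (Finsupp.single h b) f = b • Lmap h f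
  rw [Finsupp.lsum_single, LinearMap.toSpanSingleton_apply, LinearMap.smul_apply]

lemma tauMap_tmul_of (f : G → k) (h : G) :
    tauMap (f ⊗ₜ[k] MonoidAlgebra.of k G h) = Lmap h f := by
  rw [MonoidAlgebra.of_apply, tauMap_tmul, one_smul]

lemma tauMap_basis (y h : G) :
    tauMap (Pi.single y (1:k) ⊗ₜ[k] MonoidAlgebra.of k G h)
      = MonoidAlgebra.single (h⁻¹ * y * h) (1:k) := by
  rw [tauMap_tmul_of, Lmap_single]

/-- The projection `D → kG_ad`, `p_y ⋈ h ↦ h⁻¹yh`. -/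
noncomputable def piMap (dd : DoubleData k G D) : D →ₗ[k] MonoidAlgebra k G :=
  tauMap ∘ₗ dd.e.symm.toLinearMap

lemma piMap_e (dd : DoubleData k G D) (t : (G → k) ⊗[k] MonoidAlgebra k G) :
    piMap dd (dd.e t) = tauMap t := by
  simp [piMap]

/-- Two linear maps out of `D` agreeing on the spanning set `p_y ⋈ h` are equal. -/
lemma DoubleData.ext_on {M : Type v} [AddCommGroup M] [Module k M]
    (dd : DoubleData k G D) {P Q : D →ₗ[k] M}
    (H : ∀ y h : G,
      P (dd.e (Pi.single y (1:k) ⊗ₜ[k] MonoidAlgebra.of k G h))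
        = Q (dd.e (Pi.single y (1:k) ⊗ₜ[k] MonoidAlgebra.of k G h))) : P = Q := by
  have hcomp : P ∘ₗ dd.e.toLinearMap = Q ∘ₗ dd.e.toLinearMap := by
    apply TensorProduct.ext
    apply Module.Basis.ext (Pi.basisFun k G)
    intro y
    refine MonoidAlgebra.lhom_ext' fun h => LinearMap.ext fun b => ?_
    have hb : (MonoidAlgebra.single h b : MonoidAlgebra k G)
        = b • MonoidAlgebra.of k G h := by
      rw [MonoidAlgebra.of_apply]
      rw [MonoidAlgebra.smul_single', mul_one]
    simp only [LinearMap.comp_apply, MonoidAlgebra.lsingle_apply, LinearMap.compr₂_apply,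
      TensorProduct.mk_apply, Pi.basisFun_apply, hb, TensorProduct.tmul_smul,
      map_smul]
    exact congrArg (b • ·) (H y h)
  ext d
  have := congrFun (congrArg (fun (L : ((G → k) ⊗[k] MonoidAlgebra k G) →ₗ[k] M) x => L x)
    hcomp) (dd.e.symm d)
  simpa using this

lemma sum_pi_single_one : (∑ x : G, Pi.single x (1:k)) = (1 : G → k) := by
  have := Finset.univ_sum_single (1 : G → k)
  simpa using this

lemma emb_of_eq_sum (dd : DoubleData k G D) (g : G) :
    dd.emb (MonoidAlgebra.of k G g)
      = ∑ x : G, dd.e (Pi.single x (1:k) ⊗ₜ[k] MonoidAlgebra.of k G g) := by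
  rw [DoubleData.emb, LinearMap.comp_apply, TensorProduct.mk_apply,
    ← sum_pi_single_one, TensorProduct.sum_tmul, map_sum]
  rfl

lemma emb_mul_basis (dd : DoubleData k G D) (g y h : G) :
    dd.emb (MonoidAlgebra.of k G g) * dd.e (Pi.single y (1:k) ⊗ₜ[k] MonoidAlgebra.of k G h)
      = dd.e (Pi.single (g * y * g⁻¹) (1:k) ⊗ₜ[k] MonoidAlgebra.of k G (g * h)) := by
  rw [emb_of_eq_sum, Finset.sum_mul]
  have key : ∀ x : G,
      dd.e (Pi.single x (1:k) ⊗ₜ[k] MonoidAlgebra.of k G g)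
        * dd.e (Pi.single y (1:k) ⊗ₜ[k] MonoidAlgebra.of k G h)
      = dd.e ((Pi.single x (1:k) * Pi.single (g * y * g⁻¹) (1:k)) ⊗ₜ[k]
          MonoidAlgebra.of k G (g * h)) := fun x => dd.mul x y g h
  rw [Finset.sum_congr rfl (fun x _ => key x), ← map_sum]
  congr 1
  rw [← TensorProduct.sum_tmul]
  congr 1
  rw [← Finset.sum_mul, sum_pi_single_one, one_mul]

lemma basis_mul_emb (dd : DoubleData k G D) (g y h : G) :
    dd.e (Pi.single y (1:k) ⊗ₜ[k] MonoidAlgebra.of k G h) * dd.emb (MonoidAlgebra.of k G g)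
      = dd.e (Pi.single y (1:k) ⊗ₜ[k] MonoidAlgebra.of k G (h * g)) := by
  rw [emb_of_eq_sum, Finset.mul_sum]
  have key : ∀ x : G,
      dd.e (Pi.single y (1:k) ⊗ₜ[k] MonoidAlgebra.of k G h)
        * dd.e (Pi.single x (1:k) ⊗ₜ[k] MonoidAlgebra.of k G g)
      = dd.e ((Pi.single y (1:k) * Pi.single (h * x * h⁻¹) (1:k)) ⊗ₜ[k]
          MonoidAlgebra.of k G (h * g)) := fun x => dd.mul y x h g
  rw [Finset.sum_congr rfl (fun x _ => key x), ← map_sum]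
  congr 1
  rw [← TensorProduct.sum_tmul]
  congr 1
  have hsum : (∑ x : G, Pi.single (h * x * h⁻¹) (1:k)) = (1 : G → k) := by
    rw [← sum_pi_single_one]
    exact Fintype.sum_equiv
      ⟨fun x => h * x * h⁻¹, fun x => h⁻¹ * x * h, fun x => by group, fun x => by group⟩
      (fun x => Pi.single (h * x * h⁻¹) (1:k)) (fun x => Pi.single x (1:k))
      (fun x => rfl)
  rw [← Finset.mul_sum, hsum, mul_one]

lemma piMap_emb_of_mul (dd : DoubleData k G D) (g : G) (d : D) :
    piMap dd (dd.emb (MonoidAlgebra.of k G g) * d) = piMap dd d := by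
  have : piMap dd ∘ₗ LinearMap.mulLeft k (dd.emb (MonoidAlgebra.of k G g)) = piMap dd := by
    apply dd.ext_on
    intro y h
    simp only [LinearMap.comp_apply, LinearMap.mulLeft_apply]
    rw [emb_mul_basis, piMap_e, piMap_e, tauMap_basis, tauMap_basis]
    congr 1
    group
  exact congrFun (congrArg (fun (L : D →ₗ[k] MonoidAlgebra k G) x => L x) this) d

lemma piMap_emb_mul (dd : DoubleData k G D) (c : MonoidAlgebra k G) (d : D) :
    piMap dd (dd.emb c * d) = (c.coeff.sum fun _ a => a) • piMap dd d := by
  induction c using MonoidAlgebra.induction_linear with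
  | zero => simp
  | add c1 c2 h1 h2 =>
      rw [map_add, add_mul, map_add, h1, h2, MonoidAlgebra.coeff_add, Finsupp.sum_add_index,
        add_smul]
      · intro a _; rfl
      · intro a _ b1 b2; rfl
  | single a b =>
      have hsum : ((MonoidAlgebra.single a b : MonoidAlgebra k G).coeff.sum fun _ c => c) = b :=
        Finsupp.sum_single_index rfl
      have hb : (MonoidAlgebra.single a b : MonoidAlgebra k G)
          = b • MonoidAlgebra.of k G a := by
        rw [MonoidAlgebra.of_apply]
        rw [MonoidAlgebra.smul_single', mul_one]
      rw [hsum, hb, map_smul, smul_mul_assoc, map_smul, piMap_emb_of_mul]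

lemma piMap_ker (dd : DoubleData k G D) : dd.QI ≤ LinearMap.ker (piMap dd) := by
  rw [DoubleData.QI, Submodule.span_le]
  rintro z ⟨c, d, hc, rfl⟩
  simp only [SetLike.mem_coe, LinearMap.mem_ker]
  rw [piMap_emb_mul, hc, zero_smul]

/-- The map `Q → kG_ad` induced by `piMap`. -/
noncomputable def phiBar (dd : DoubleData k G D) : dd.Qcar →ₗ[k] MonoidAlgebra k G :=
  dd.QI.liftQ (piMap dd) (piMap_ker dd)

lemma phiBar_mk (dd : DoubleData k G D) (d : D) :
    phiBar dd (dd.Qmk d) = piMap dd d := rfl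

/-- The inverse map `kG_ad → Q`, `single w b ↦ b • [p_w ⋈ 1]`. -/
noncomputable def rhoMap (dd : DoubleData k G D) : MonoidAlgebra k G →ₗ[k] dd.Qcar :=
  Finsupp.linearCombination k
    (fun w => dd.Qmk (dd.e (Pi.single w (1:k) ⊗ₜ[k] (1 : MonoidAlgebra k G))))
    ∘ₗ (MonoidAlgebra.coeffLinearEquiv k).toLinearMap

lemma rhoMap_single (dd : DoubleData k G D) (w : G) (b : k) :
    rhoMap dd (MonoidAlgebra.single w b)
      = b • dd.Qmk (dd.e (Pi.single w (1:k) ⊗ₜ[k] (1 : MonoidAlgebra k G))) := by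
  exact Finsupp.linearCombination_single k
    (v := fun w => dd.Qmk (dd.e (Pi.single w (1:k) ⊗ₜ[k] (1 : MonoidAlgebra k G)))) b w

lemma one_eq_of_one : (1 : MonoidAlgebra k G) = MonoidAlgebra.of k G 1 := by
  rw [MonoidAlgebra.of_apply, MonoidAlgebra.one_def]

lemma Qmk_basis_eq (dd : DoubleData k G D) (y h : G) :
    dd.Qmk (dd.e (Pi.single y (1:k) ⊗ₜ[k] MonoidAlgebra.of k G h))
      = dd.Qmk (dd.e (Pi.single (h⁻¹ * y * h) (1:k) ⊗ₜ[k] (1 : MonoidAlgebra k G))) := by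
  rw [DoubleData.Qmk, DoubleData.Qmk]
  refine (Submodule.Quotient.eq dd.QI).mpr ?_
  have h1 : dd.emb (MonoidAlgebra.of k G h)
      * dd.e (Pi.single (h⁻¹ * y * h) (1:k) ⊗ₜ[k] (1 : MonoidAlgebra k G))
      = dd.e (Pi.single y (1:k) ⊗ₜ[k] MonoidAlgebra.of k G h) := by
    rw [one_eq_of_one, emb_mul_basis,
      show h * (h⁻¹ * y * h) * h⁻¹ = y by group, mul_one]
  have h2 : dd.emb (MonoidAlgebra.of k G 1)
      * dd.e (Pi.single (h⁻¹ * y * h) (1:k) ⊗ₜ[k] (1 : MonoidAlgebra k G))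
      = dd.e (Pi.single (h⁻¹ * y * h) (1:k) ⊗ₜ[k] (1 : MonoidAlgebra k G)) := by
    rw [one_eq_of_one, emb_mul_basis,
      show (1:G) * (h⁻¹ * y * h) * (1:G)⁻¹ = h⁻¹ * y * h by group, one_mul]
  apply Submodule.subset_span
  refine ⟨MonoidAlgebra.of k G h - MonoidAlgebra.of k G 1,
    dd.e (Pi.single (h⁻¹ * y * h) (1:k) ⊗ₜ[k] (1 : MonoidAlgebra k G)), ?_, ?_⟩
  · rw [MonoidAlgebra.of_apply, MonoidAlgebra.of_apply]
    rw [MonoidAlgebra.coeff_sub, MonoidAlgebra.coeff_single, MonoidAlgebra.coeff_single]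
    rcases eq_or_ne h 1 with rfl | hne
    · simp
    · rw [Finsupp.sum_sub_index (fun _ _ _ => rfl)]
      rw [Finsupp.sum_single_index rfl, Finsupp.sum_single_index rfl, sub_self]
  · rw [map_sub, sub_mul, h1, h2]


lemma phiBar_mk_basis (dd : DoubleData k G D) (y h : G) :
    phiBar dd (dd.Qmk (dd.e (Pi.single y (1:k) ⊗ₜ[k] MonoidAlgebra.of k G h)))
      = MonoidAlgebra.single (h⁻¹ * y * h) (1:k) := by
  rw [phiBar_mk, piMap_e, tauMap_basis]

lemma phiBar_comp_rho (dd : DoubleData k G D) :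
    phiBar dd ∘ₗ rhoMap dd = LinearMap.id := by
  refine MonoidAlgebra.lhom_ext' fun a => LinearMap.ext fun b => ?_
  show phiBar dd (rhoMap dd (MonoidAlgebra.single a b)) = MonoidAlgebra.single a b
  rw [rhoMap_single dd a b, map_smul, one_eq_of_one, phiBar_mk_basis,
    show (1:G)⁻¹ * a * 1 = a by group]
  rw [MonoidAlgebra.smul_single', mul_one]

lemma rho_comp_phiBar (dd : DoubleData k G D) :
    rhoMap dd ∘ₗ phiBar dd = LinearMap.id := by
  have hcomp : rhoMap dd ∘ₗ piMap dd = dd.QI.mkQ := by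
    apply dd.ext_on
    intro y h
    rw [LinearMap.comp_apply, piMap_e, tauMap_basis,
      show (MonoidAlgebra.single (h⁻¹ * y * h) (1:k)) =
        MonoidAlgebra.single (h⁻¹ * y * h) (1:k) from rfl,
      rhoMap_single, one_smul, ← Qmk_basis_eq]
    rfl
  ext q
  obtain ⟨d, rfl⟩ := Submodule.Quotient.mk_surjective dd.QI q
  show rhoMap dd (phiBar dd (Submodule.Quotient.mk d)) = (Submodule.Quotient.mk d : dd.Qcar)
  have h1 : phiBar dd (Submodule.Quotient.mk d) = piMap dd d := rfl
  rw [h1]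
  have := congrFun (congrArg (fun (L : D →ₗ[k] dd.Qcar) x => L x) hcomp) d
  exact this

lemma piMap_mul_emb (dd : DoubleData k G D) (g : G) (d : D) :
    piMap dd (d * dd.emb (MonoidAlgebra.of k G g)) = adEnd k G g (piMap dd d) := by
  have : piMap dd ∘ₗ LinearMap.mulRight k (dd.emb (MonoidAlgebra.of k G g))
      = (adEnd k G g) ∘ₗ piMap dd := by
    apply dd.ext_on
    intro y h
    simp only [LinearMap.comp_apply, LinearMap.mulRight_apply]
    rw [basis_mul_emb, piMap_e, piMap_e, tauMap_basis, tauMap_basis, adEnd_single]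
    congr 1
    group
  exact congrFun (congrArg (fun (L : D →ₗ[k] MonoidAlgebra k G) x => L x) this) d

end Aux

end GroupModDepth

open GroupModDepth TensorProduct in
/-- for a finite group `G` and a field `k` with `char k ∤ |G|`, the quotient
module `Q = D(G)/(kG)⁺D(G)` of the Drinfeld double has `dim_k Q = |G|` and is isomorphic, as
a right `G`-module, to `kG_ad` (the group algebra under the right adjoint action), via
`p_y ⋈ h ↦ h⁻¹yh`; moreover `(kG)*_ad ≅ kG_ad` via `p_g ↦ g`. -/
theorem drinfeld_double_quotient_module_is_adjoint_module
    (k G D : Type u) [Field k] [Group G] [Fintype G] [DecidableEq G]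
    [Ring D] [Algebra k D]
    (hchar : (Fintype.card G : k) ≠ 0)
    (dd : DoubleData k G D) :
    Module.finrank k dd.Qcar = Fintype.card G ∧
    (∃ φ : dd.Qcar ≃ₗ[k] MonoidAlgebra k G,
      (∀ (g : G) (q : dd.Qcar),
        φ (dd.Qact (dd.e ((1 : G → k) ⊗ₜ[k] MonoidAlgebra.of k G g)) q)
          = adEnd k G g (φ q)) ∧
      (∀ y h : G,
        φ (dd.Qmk (dd.e (Pi.single y (1:k) ⊗ₜ[k] MonoidAlgebra.of k G h)))
          = MonoidAlgebra.single (h⁻¹ * y * h) 1)) ∧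
    (∃ ψ : (G → k) ≃ₗ[k] MonoidAlgebra k G,
      (∀ g : G, ψ (Pi.single g 1) = MonoidAlgebra.single g 1) ∧
      (∀ (g : G) (f : G → k), ψ (fun x => f (g * x * g⁻¹)) = adEnd k G g (ψ f))) := by
  have hfr : Module.finrank k dd.Qcar = Fintype.card G := by
    rw [(LinearEquiv.ofLinear (phiBar dd) (rhoMap dd)
      (phiBar_comp_rho dd) (rho_comp_phiBar dd) :
        dd.Qcar ≃ₗ[k] MonoidAlgebra k G).finrank_eq]
    rw [(MonoidAlgebra.coeffLinearEquiv k).finrank_eq]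
    exact Module.finrank_finsupp_self k
  refine ⟨hfr, ⟨LinearEquiv.ofLinear (phiBar dd) (rhoMap dd)
      (phiBar_comp_rho dd) (rho_comp_phiBar dd), ?_, ?_⟩, ?_⟩
  · intro g q
    obtain ⟨d, rfl⟩ := Submodule.Quotient.mk_surjective dd.QI q
    exact piMap_mul_emb dd g d
  · intro y h
    exact phiBar_mk_basis dd y h
  · refine ⟨(Finsupp.linearEquivFunOnFinite k k G).symm.trans
      (MonoidAlgebra.coeffLinearEquiv k).symm, ?_, ?_⟩
    · intro g
      ext x
      exact (congrFun (Finsupp.single_eq_pi_single (a := g) (b := (1:k))) x).symm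
    · intro g f
      have hinj : Function.Injective (fun x : G => g⁻¹ * x * g) := by
        intro a b hab
        simpa using mul_left_cancel (mul_right_cancel hab)
      ext w
      have key := Finsupp.mapDomain_apply hinj
        ((Finsupp.linearEquivFunOnFinite k k G).symm f) (g * w * g⁻¹)
      rw [show g⁻¹ * (g * w * g⁻¹) * g = w by group] at key
      exact key.symm
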